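/- arXiv:1803.03118 — 2 statements merged into one kernel-verified Lean document; each statement's English description precedes it below -/
import Mathlib

section
/- Let n ≥ 2 be an integer, λ = (n-1)/2, ê = (1,0,…,0) ∈ ℝ^{n+1}, m ∈ ℕ₀, r > 0 and x ∈ ℝ^{n+1} with x ≠ rê. Then the m-th derivative in r of the function r ↦ (|x|² - 2r⟨x,ê⟩ + r²)^{-λ} equals m! · C_m^λ(cos χ) / |x - rê|^{m+2λ}, where cos χ = ⟨x - rê, ê⟩ / |x - rê|. -/
set_option maxHeartbeats 1000000


open Real MeasureTheory Set Filter
open scoped RealInnerProductSpace BigOperators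

noncomputable def lamb (n : ℕ) : ℝ := ((n : ℝ) - 1) / 2

noncomputable def gegenbauer (lam : ℝ) (l : ℕ) (t : ℝ) : ℝ :=
  ∑ k ∈ Finset.range (l / 2 + 1),
    (-1 : ℝ) ^ k * Real.Gamma ((l : ℝ) - (k : ℝ) + lam) /
      (Real.Gamma lam * (Nat.factorial k : ℝ) * (Nat.factorial (l - 2 * k) : ℝ)) *
      (2 * t) ^ (l - 2 * k)

noncomputable def sigmaN (n : ℕ) : ℝ := 2 * Real.pi ^ (lamb n + 1) / Real.Gamma (lamb n + 1)

noncomputable def pw (n : ℕ) (a : ℝ) (m : ℕ) (t : ℝ) : ℝ :=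
  (1 / sigmaN n) * ∑' l : ℕ, ((lamb n + l) / lamb n) * (a * l) ^ m * Real.exp (-(a * l)) *
    gegenbauer (lamb n) l t

noncomputable def gcoef (lam : ℝ) (m k : ℕ) : ℝ :=
  (-1 : ℝ) ^ k * Real.Gamma ((m : ℝ) - (k : ℝ) + lam) /
    (Real.Gamma lam * (Nat.factorial k : ℝ) * (Nat.factorial (m - 2 * k) : ℝ))

noncomputable def Fsum (lam A u : ℝ) (m : ℕ) (s : ℝ) : ℝ :=
  ∑ k ∈ Finset.range (m / 2 + 1),
    gcoef lam m k * 2 ^ (m - 2 * k) * (u - s) ^ (m - 2 * k) *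
      (A - 2 * s * u + s ^ 2) ^ (-lam - ((m : ℝ) - (k : ℝ)))

lemma gcoef_rec (lam : ℝ) (hlam : 0 < lam) (m k : ℕ) (h : 2 * k + 2 ≤ m) :
    ((m : ℝ) + 1) * gcoef lam (m + 1) (k + 1)
      = (lam + (m : ℝ) - 1 - (k : ℝ)) * gcoef lam m (k + 1)
        - 2 * ((m : ℝ) - 2 * (k : ℝ)) * gcoef lam m k := by
  have hΓ : Real.Gamma lam ≠ 0 := (Real.Gamma_pos_of_pos hlam).ne'
  obtain ⟨j, rfl⟩ : ∃ j, m = 2 * k + 2 + j := ⟨m - (2 * k + 2), by omega⟩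
  have f1 : (2 * k + 2 + j) + 1 - 2 * (k + 1) = j + 1 := by omega
  have f2 : (2 * k + 2 + j) - 2 * (k + 1) = j := by omega
  have f3 : (2 * k + 2 + j) - 2 * k = j + 2 := by omega
  unfold gcoef
  rw [f1, f2, f3]
  have hx : ((2 * k + 2 + j : ℕ) : ℝ) - ((k + 1 : ℕ) : ℝ) + lam ≠ 0 := by push_cast; nlinarith
  have e1 : ((2 * k + 2 + j + 1 : ℕ) : ℝ) - ((k + 1 : ℕ) : ℝ) + lam
      = (((2 * k + 2 + j : ℕ) : ℝ) - ((k + 1 : ℕ) : ℝ) + lam) + 1 := by push_cast; ring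
  have e3 : ((2 * k + 2 + j : ℕ) : ℝ) - ((k : ℕ) : ℝ) + lam
      = (((2 * k + 2 + j : ℕ) : ℝ) - ((k + 1 : ℕ) : ℝ) + lam) + 1 := by push_cast; ring
  rw [e1, e3, Real.Gamma_add_one hx]
  have hK : (Nat.factorial k : ℝ) ≠ 0 := by positivity
  have hF : (Nat.factorial j : ℝ) ≠ 0 := by positivity
  simp only [Nat.factorial_succ]
  push_cast
  field_simp
  ring

lemma gcoef_zero (lam : ℝ) (hlam : 0 < lam) (m : ℕ) :
    ((m : ℝ) + 1) * gcoef lam (m + 1) 0 = (lam + (m : ℝ)) * gcoef lam m 0 := by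
  have hΓ : Real.Gamma lam ≠ 0 := (Real.Gamma_pos_of_pos hlam).ne'
  unfold gcoef
  have f1 : (m + 1) - 2 * 0 = m + 1 := by omega
  have f2 : m - 2 * 0 = m := by omega
  rw [f1, f2]
  have hx : ((m : ℕ) : ℝ) - ((0 : ℕ) : ℝ) + lam ≠ 0 := by push_cast; nlinarith
  have e1 : ((m + 1 : ℕ) : ℝ) - ((0 : ℕ) : ℝ) + lam
      = (((m : ℕ) : ℝ) - ((0 : ℕ) : ℝ) + lam) + 1 := by push_cast; ring
  rw [e1, Real.Gamma_add_one hx]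
  have hM : (Nat.factorial m : ℝ) ≠ 0 := by positivity
  simp only [Nat.factorial_succ]
  push_cast
  field_simp
  ring

lemma gcoef_top (lam : ℝ) (hlam : 0 < lam) (N : ℕ) :
    ((2 * N + 1 : ℕ) : ℝ) * gcoef lam (2 * N + 2) (N + 1) + gcoef lam (2 * N + 2) (N + 1)
      = -2 * gcoef lam (2 * N + 1) N := by
  have hΓ : Real.Gamma lam ≠ 0 := (Real.Gamma_pos_of_pos hlam).ne'
  unfold gcoef
  have f1 : (2 * N + 2) - 2 * (N + 1) = 0 := by omega
  have f2 : (2 * N + 1) - 2 * N = 1 := by omega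
  rw [f1, f2]
  have hx : ((N : ℝ) + lam) ≠ 0 := by positivity
  have e1 : ((2 * N + 2 : ℕ) : ℝ) - ((N + 1 : ℕ) : ℝ) + lam = ((N : ℝ) + lam) + 1 := by
    push_cast; ring
  have e2 : ((2 * N + 1 : ℕ) : ℝ) - ((N : ℕ) : ℝ) + lam = ((N : ℝ) + lam) + 1 := by
    push_cast; ring
  rw [e1, e2]
  have hK : (Nat.factorial N : ℝ) ≠ 0 := by positivity
  simp only [Nat.factorial_succ, Nat.factorial_zero, Nat.factorial_one]
  push_cast
  field_simp
  ring

lemma Dstep (lam : ℝ) (hlam : 0 < lam) (w q : ℝ) (m k : ℕ) (h : 2 * k + 2 ≤ m) :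
    ((m : ℝ) + 1) * gcoef lam (m + 1) (k + 1) * 2 ^ (m + 1 - 2 * (k + 1)) *
        w ^ (m + 1 - 2 * (k + 1)) * q ^ (k + 1)
      = gcoef lam m (k + 1) * 2 ^ (m - 2 * (k + 1)) *
            (2 * (lam + (m : ℝ) - ((k + 1 : ℕ) : ℝ))) * w ^ (m + 1 - 2 * (k + 1)) * q ^ (k + 1)
        - gcoef lam m k * 2 ^ (m - 2 * k) * ((m - 2 * k : ℕ) : ℝ) * w ^ (m - 2 * k - 1) *
            q ^ (k + 1) := by
  obtain ⟨j, rfl⟩ : ∃ j, m = 2 * k + 2 + j := ⟨m - (2 * k + 2), by omega⟩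
  have f1 : 2 * k + 2 + j + 1 - 2 * (k + 1) = j + 1 := by omega
  have f2 : 2 * k + 2 + j - 2 * (k + 1) = j := by omega
  have f4 : 2 * k + 2 + j - 2 * k - 1 = j + 1 := by omega
  have f3 : 2 * k + 2 + j - 2 * k = j + 2 := by omega
  rw [f1, f2, f4, f3]
  have hrec := gcoef_rec lam hlam (2 * k + 2 + j) k h
  push_cast at hrec ⊢
  linear_combination hrec * (2 ^ (j + 1) * w ^ (j + 1) * q ^ (k + 1))

lemma D0step (lam : ℝ) (hlam : 0 < lam) (w q : ℝ) (m : ℕ) :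
    ((m : ℝ) + 1) * gcoef lam (m + 1) 0 * 2 ^ (m + 1 - 2 * 0) * w ^ (m + 1 - 2 * 0) * q ^ 0
      = gcoef lam m 0 * 2 ^ (m - 2 * 0) * (2 * (lam + (m : ℝ) - ((0 : ℕ) : ℝ))) *
          w ^ (m + 1 - 2 * 0) * q ^ 0 := by
  have f1 : m + 1 - 2 * 0 = m + 1 := by omega
  have f2 : m - 2 * 0 = m := by omega
  rw [f1, f2]
  have hz := gcoef_zero lam hlam m
  push_cast
  linear_combination hz * (2 ^ (m + 1) * w ^ (m + 1) * q ^ 0)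

lemma Dtopstep (lam : ℝ) (hlam : 0 < lam) (w q : ℝ) (N : ℕ) :
    (((2 * N + 1 : ℕ) : ℝ) + 1) * gcoef lam (2 * N + 1 + 1) (N + 1) *
        2 ^ (2 * N + 1 + 1 - 2 * (N + 1)) * w ^ (2 * N + 1 + 1 - 2 * (N + 1)) * q ^ (N + 1)
      = -(gcoef lam (2 * N + 1) N * 2 ^ (2 * N + 1 - 2 * N) *
          ((2 * N + 1 - 2 * N : ℕ) : ℝ) * w ^ (2 * N + 1 - 2 * N - 1) * q ^ (N + 1)) := by
  have f1 : 2 * N + 1 + 1 - 2 * (N + 1) = 0 := by omega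
  have f2 : 2 * N + 1 - 2 * N = 1 := by omega
  have f3 : 2 * N + 1 - 2 * N - 1 = 0 := by omega
  have f4 : 2 * N + 1 + 1 = 2 * N + 2 := by omega
  rw [f1, f3, f2, f4]
  have ht := gcoef_top lam hlam N
  push_cast at ht ⊢
  linear_combination ht * q ^ (N + 1)

lemma poly (lam : ℝ) (hlam : 0 < lam) (m : ℕ) (w q : ℝ) :
    (∑ k ∈ Finset.range (m / 2 + 1),
      gcoef lam m k * 2 ^ (m - 2 * k) *
        (2 * (lam + (m : ℝ) - (k : ℝ)) * w ^ (m + 1 - 2 * k) * q ^ k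
          - ((m - 2 * k : ℕ) : ℝ) * w ^ (m - 2 * k - 1) * q ^ (k + 1)))
      = ∑ k ∈ Finset.range ((m + 1) / 2 + 1),
          ((m : ℝ) + 1) * gcoef lam (m + 1) k * 2 ^ (m + 1 - 2 * k) * w ^ (m + 1 - 2 * k) *
            q ^ k := by
  set P : ℕ → ℝ := fun k =>
    gcoef lam m k * 2 ^ (m - 2 * k) * (2 * (lam + (m : ℝ) - (k : ℝ))) * w ^ (m + 1 - 2 * k) *
      q ^ k with hP
  set R : ℕ → ℝ := fun k =>
    gcoef lam m k * 2 ^ (m - 2 * k) * ((m - 2 * k : ℕ) : ℝ) * w ^ (m - 2 * k - 1) * q ^ (k + 1)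
    with hR
  set D : ℕ → ℝ := fun k =>
    ((m : ℝ) + 1) * gcoef lam (m + 1) k * 2 ^ (m + 1 - 2 * k) * w ^ (m + 1 - 2 * k) * q ^ k
    with hD
  have hsplit : (∑ k ∈ Finset.range (m / 2 + 1),
      gcoef lam m k * 2 ^ (m - 2 * k) *
        (2 * (lam + (m : ℝ) - (k : ℝ)) * w ^ (m + 1 - 2 * k) * q ^ k
          - ((m - 2 * k : ℕ) : ℝ) * w ^ (m - 2 * k - 1) * q ^ (k + 1)))
      = (∑ k ∈ Finset.range (m / 2 + 1), P k) - ∑ k ∈ Finset.range (m / 2 + 1), R k := by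
    rw [← Finset.sum_sub_distrib]
    refine Finset.sum_congr rfl fun k _ => ?_
    simp only [hP, hR]; ring
  rw [hsplit]
  show _ = ∑ k ∈ Finset.range ((m + 1) / 2 + 1), D k
  rcases Nat.even_or_odd m with he | ho
  · obtain ⟨N, rfl⟩ : ∃ N, m = 2 * N := by
      rcases he with ⟨t, ht⟩; exact ⟨t, by omega⟩
    have r1 : 2 * N / 2 + 1 = N + 1 := by omega
    have r2 : (2 * N + 1) / 2 + 1 = N + 1 := by omega
    rw [r1, r2]
    rw [Finset.sum_range_succ' P N, Finset.sum_range_succ R N, Finset.sum_range_succ' D N]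
    have hRN : R N = 0 := by
      have : 2 * N - 2 * N = 0 := by omega
      simp [hR, this]
    have hD0 : D 0 = P 0 := by
      simp only [hD, hP]
      exact D0step lam hlam w q (2 * N)
    have hsum : ∑ k ∈ Finset.range N, P (k + 1) - ∑ k ∈ Finset.range N, R k
        = ∑ k ∈ Finset.range N, D (k + 1) := by
      rw [← Finset.sum_sub_distrib]
      refine Finset.sum_congr rfl fun k hk => ?_
      have hk' : 2 * k + 2 ≤ 2 * N := by
        have := Finset.mem_range.mp hk; omega
      simp only [hD, hP, hR]
      exact (Dstep lam hlam w q (2 * N) k hk').symm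
    rw [hRN, hD0, ← hsum]; ring
  · obtain ⟨N, rfl⟩ := ho
    have r1 : (2 * N + 1) / 2 + 1 = N + 1 := by omega
    have r2 : (2 * N + 1 + 1) / 2 + 1 = N + 2 := by omega
    rw [r1, r2]
    rw [Finset.sum_range_succ' P N, Finset.sum_range_succ R N]
    rw [Finset.sum_range_succ D (N + 1), Finset.sum_range_succ' D N]
    have hDtop : D (N + 1) = -(R N) := by
      simp only [hD, hR]
      exact Dtopstep lam hlam w q N
    have hD0 : D 0 = P 0 := by
      simp only [hD, hP]
      exact D0step lam hlam w q (2 * N + 1)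
    have hsum : ∑ k ∈ Finset.range N, P (k + 1) - ∑ k ∈ Finset.range N, R k
        = ∑ k ∈ Finset.range N, D (k + 1) := by
      rw [← Finset.sum_sub_distrib]
      refine Finset.sum_congr rfl fun k hk => ?_
      have hk' : 2 * k + 2 ≤ 2 * N + 1 := by
        have := Finset.mem_range.mp hk; omega
      simp only [hD, hP, hR]
      exact (Dstep lam hlam w q (2 * N + 1) k hk').symm
    rw [hDtop, hD0, ← hsum]; ring

lemma hasDerivAt_Fsum (lam A u : ℝ) (hlam : 0 < lam) (m : ℕ) (s : ℝ)
    (hQ : 0 < A - 2 * s * u + s ^ 2) :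
    HasDerivAt (fun t => Fsum lam A u m t)
      (((m : ℝ) + 1) * Fsum lam A u (m + 1) s) s := by
  have hQd : HasDerivAt (fun t : ℝ => A - 2 * t * u + t ^ 2) (2 * s - 2 * u) s := by
    have h1 : HasDerivAt (fun t : ℝ => 2 * t * u) (2 * u) s := by
      simpa using ((hasDerivAt_id s).const_mul (2 : ℝ)).mul_const u
    have h2 : HasDerivAt (fun t : ℝ => t ^ 2) (2 * s) s := by
      simpa using hasDerivAt_pow 2 s
    have h3 : HasDerivAt (fun t : ℝ => A - 2 * t * u + t ^ 2) (0 - 2 * u + 2 * s) s :=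
      ((hasDerivAt_const s A).sub h1).add h2
    exact h3.congr_deriv (by ring)
  have hterm : ∀ k ∈ Finset.range (m / 2 + 1),
      HasDerivAt (fun t => gcoef lam m k * 2 ^ (m - 2 * k) * (u - t) ^ (m - 2 * k) *
          (A - 2 * t * u + t ^ 2) ^ (-lam - ((m : ℝ) - (k : ℝ))))
        (gcoef lam m k * 2 ^ (m - 2 * k) *
            (((m - 2 * k : ℕ) : ℝ) * (u - s) ^ (m - 2 * k - 1) * (0 - 1)) *
            ((A - 2 * s * u + s ^ 2) ^ (-lam - ((m : ℝ) - (k : ℝ))))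
          + gcoef lam m k * 2 ^ (m - 2 * k) * (u - s) ^ (m - 2 * k) *
            ((-lam - ((m : ℝ) - (k : ℝ))) *
              (A - 2 * s * u + s ^ 2) ^ (-lam - ((m : ℝ) - (k : ℝ)) - 1) * (2 * s - 2 * u))) s := by
    intro k _
    have hw : HasDerivAt (fun t : ℝ => (u - t) ^ (m - 2 * k))
        (((m - 2 * k : ℕ) : ℝ) * (u - s) ^ (m - 2 * k - 1) * (0 - 1)) s :=
      ((hasDerivAt_const s u).sub (hasDerivAt_id s)).pow _
    have hq : HasDerivAt (fun t : ℝ => (A - 2 * t * u + t ^ 2) ^ (-lam - ((m : ℝ) - (k : ℝ))))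
        ((-lam - ((m : ℝ) - (k : ℝ))) *
          (A - 2 * s * u + s ^ 2) ^ (-lam - ((m : ℝ) - (k : ℝ)) - 1) * (2 * s - 2 * u)) s := by
      have h := hQd.rpow_const (p := -lam - ((m : ℝ) - (k : ℝ))) (Or.inl hQ.ne')
      convert h using 1; ring
    exact ((hw.const_mul (gcoef lam m k * 2 ^ (m - 2 * k))).mul hq).congr_deriv (by ring)
  have hsum := HasDerivAt.sum hterm
  have hFs : (fun t => Fsum lam A u m t)
      = fun t => ∑ k ∈ Finset.range (m / 2 + 1),
          gcoef lam m k * 2 ^ (m - 2 * k) * (u - t) ^ (m - 2 * k) *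
            (A - 2 * t * u + t ^ 2) ^ (-lam - ((m : ℝ) - (k : ℝ))) := rfl
  rw [hFs]
  convert hsum using 1
  · rfl
  · rfl
  · funext t; rw [Finset.sum_apply]
  set q := A - 2 * s * u + s ^ 2 with hq
  set X := q ^ (-lam - ((m : ℝ) + 1)) with hX
  have key1 : ∀ k : ℕ, q ^ (-lam - ((m : ℝ) - (k : ℝ))) = q ^ (k + 1) * X := by
    intro k
    rw [hX, ← Real.rpow_natCast q (k + 1), ← Real.rpow_add hQ]
    congr 1; push_cast; ring
  have key2 : ∀ k : ℕ, q ^ (-lam - ((m : ℝ) - (k : ℝ)) - 1) = q ^ k * X := by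
    intro k
    rw [hX, ← Real.rpow_natCast q k, ← Real.rpow_add hQ]
    congr 1; push_cast; ring
  have key3 : ∀ k : ℕ, q ^ (-lam - (((m + 1 : ℕ) : ℝ) - (k : ℝ))) = q ^ k * X := by
    intro k
    rw [hX, ← Real.rpow_natCast q k, ← Real.rpow_add hQ]
    congr 1; push_cast; ring
  have hR : ((m : ℝ) + 1) * Fsum lam A u (m + 1) s
      = (∑ k ∈ Finset.range ((m + 1) / 2 + 1),
          ((m : ℝ) + 1) * gcoef lam (m + 1) k * 2 ^ (m + 1 - 2 * k) * (u - s) ^ (m + 1 - 2 * k) *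
            q ^ k) * X := by
    rw [Fsum, Finset.mul_sum, Finset.sum_mul]
    refine Finset.sum_congr rfl fun k _ => ?_
    rw [key3 k]; ring
  have hL : (∑ k ∈ Finset.range (m / 2 + 1),
        (gcoef lam m k * 2 ^ (m - 2 * k) *
            (((m - 2 * k : ℕ) : ℝ) * (u - s) ^ (m - 2 * k - 1) * (0 - 1)) *
            (q ^ (-lam - ((m : ℝ) - (k : ℝ))))
          + gcoef lam m k * 2 ^ (m - 2 * k) * (u - s) ^ (m - 2 * k) *
            ((-lam - ((m : ℝ) - (k : ℝ))) *
              q ^ (-lam - ((m : ℝ) - (k : ℝ)) - 1) * (2 * s - 2 * u))))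
      = (∑ k ∈ Finset.range (m / 2 + 1),
          gcoef lam m k * 2 ^ (m - 2 * k) *
            (2 * (lam + (m : ℝ) - (k : ℝ)) * (u - s) ^ (m + 1 - 2 * k) * q ^ k
              - ((m - 2 * k : ℕ) : ℝ) * (u - s) ^ (m - 2 * k - 1) * q ^ (k + 1))) * X := by
    rw [Finset.sum_mul]
    refine Finset.sum_congr rfl fun k hk => ?_
    have hk2 : 2 * k ≤ m := by
      have := Finset.mem_range.mp hk; omega
    have e1 : m + 1 - 2 * k = (m - 2 * k) + 1 := by omega
    rw [key1 k, key2 k, e1]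
    ring
  rw [hR, hL, poly lam hlam m (u - s) q]

lemma Fsum_zero (lam A u : ℝ) (hlam : 0 < lam) (s : ℝ) :
    Fsum lam A u 0 s = (A - 2 * s * u + s ^ 2) ^ (-lam) := by
  have hΓ : Real.Gamma lam ≠ 0 := (Real.Gamma_pos_of_pos hlam).ne'
  rw [Fsum]
  simp [gcoef, Finset.sum_range_one]
  rw [div_self hΓ, one_mul]

lemma iter_deriv_eq (lam A u : ℝ) (hlam : 0 < lam) (m : ℕ) :
    ∀ s : ℝ, 0 < A - 2 * s * u + s ^ 2 →
      iteratedDeriv m (fun t : ℝ => (A - 2 * t * u + t ^ 2) ^ (-lam)) s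
        = (Nat.factorial m : ℝ) * Fsum lam A u m s := by
  induction m with
  | zero =>
      intro s hQ
      simp [iteratedDeriv_zero, Fsum_zero lam A u hlam s]
  | succ m ih =>
      intro s hQ
      rw [iteratedDeriv_succ]
      have hopen : IsOpen {t : ℝ | 0 < A - 2 * t * u + t ^ 2} := by
        apply isOpen_lt continuous_const
        fun_prop
      have hev : iteratedDeriv m (fun t : ℝ => (A - 2 * t * u + t ^ 2) ^ (-lam))
          =ᶠ[nhds s] fun t => (Nat.factorial m : ℝ) * Fsum lam A u m t :=
        Filter.eventuallyEq_of_mem (hopen.mem_nhds hQ) (fun t ht => ih t ht)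
      rw [hev.deriv_eq]
      rw [((hasDerivAt_Fsum lam A u hlam m s hQ).const_mul (Nat.factorial m : ℝ)).deriv]
      rw [Nat.factorial_succ]
      push_cast
      ring

lemma Fsum_eq (lam : ℝ) (m : ℕ) (A u r N : ℝ) (hN : 0 < N)
    (hQ : A - 2 * r * u + r ^ 2 = N ^ 2) :
    Fsum lam A u m r = gegenbauer lam m ((u - r) / N) / N ^ ((m : ℝ) + 2 * lam) := by
  rw [Fsum, gegenbauer, Finset.sum_div]
  refine Finset.sum_congr rfl fun k hk => ?_
  have hk' : 2 * k ≤ m := by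
    have := Finset.mem_range.mp hk
    have h2 : k ≤ m / 2 := by omega
    omega
  rw [hQ]
  have hNj : (N : ℝ) ^ (m - 2 * k) ≠ 0 := pow_ne_zero _ hN.ne'
  have hNr : N ^ ((m : ℝ) + 2 * lam) ≠ 0 := (Real.rpow_pos_of_pos hN _).ne'
  have key : ((N ^ 2 : ℝ)) ^ (-lam - ((m : ℝ) - (k : ℝ)))
      = (N ^ (m - 2 * k) : ℝ)⁻¹ * (N ^ ((m : ℝ) + 2 * lam))⁻¹ := by
    rw [← Real.rpow_natCast N 2, ← Real.rpow_mul hN.le, ← Real.rpow_natCast N (m - 2 * k),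
      ← Real.rpow_neg hN.le, ← Real.rpow_neg hN.le, ← Real.rpow_add hN]
    congr 1
    have : ((m - 2 * k : ℕ) : ℝ) = (m : ℝ) - 2 * k := by
      rw [Nat.cast_sub hk']; push_cast; ring
    rw [this]
    push_cast
    ring
  rw [key]
  rw [mul_pow, div_pow]
  simp only [gcoef, div_eq_mul_inv, mul_inv, inv_pow]
  ring

/-- the `m`-th derivative in `r` of `r ↦ (|x|²-2r⟨x,ê⟩+r²)^{-λ}` equals
`m! C_m^λ(cos χ)/|x-rê|^{m+2λ}` with `cos χ = ⟨x-rê,ê⟩/|x-rê|`. -/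
theorem stmt2 (n : ℕ) (hn : 2 ≤ n) (m : ℕ) (r : ℝ) (hr : 0 < r)
    (x : EuclideanSpace ℝ (Fin (n + 1)))
    (e : EuclideanSpace ℝ (Fin (n + 1))) (he : e = EuclideanSpace.single 0 1)
    (hx : x ≠ r • e) :
    iteratedDeriv m
        (fun s : ℝ => (‖x‖ ^ 2 - 2 * s * ⟪x, e⟫ + s ^ 2) ^ (-(lamb n))) r
      = (Nat.factorial m : ℝ) *
          gegenbauer (lamb n) m (⟪x - r • e, e⟫ / ‖x - r • e‖) /
          ‖x - r • e‖ ^ ((m : ℝ) + 2 * lamb n) := by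
  have hn' : (2 : ℝ) ≤ (n : ℝ) := by exact_mod_cast hn
  have hlam : 0 < lamb n := by unfold lamb; linarith
  have hne : ‖e‖ = 1 := by
    rw [he, EuclideanSpace.norm_single]
    norm_num
  set N := ‖x - r • e‖ with hNdef
  have hNpos : 0 < N := by
    rw [hNdef]
    exact norm_pos_iff.mpr (sub_ne_zero.mpr hx)
  have hee : ⟪e, e⟫ = (1 : ℝ) := by
    rw [real_inner_self_eq_norm_sq, hne]; norm_num
  have hinner : ⟪x - r • e, e⟫ = ⟪x, e⟫ - r := by
    rw [inner_sub_left, real_inner_smul_left, hee, mul_one]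
  have hQ : ‖x‖ ^ 2 - 2 * r * ⟪x, e⟫ + r ^ 2 = N ^ 2 := by
    rw [hNdef, norm_sub_sq_real, real_inner_smul_right, norm_smul, Real.norm_eq_abs, hne,
      mul_one, sq_abs]
    ring
  have hQpos : 0 < ‖x‖ ^ 2 - 2 * r * ⟪x, e⟫ + r ^ 2 := by
    rw [hQ]; positivity
  rw [iter_deriv_eq (lamb n) (‖x‖ ^ 2) ⟪x, e⟫ hlam m r hQpos,
    Fsum_eq (lamb n) m (‖x‖ ^ 2) ⟪x, e⟫ r N hNpos hQ, hinner, mul_div_assoc]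
end

section
/- Let n ≥ 2 be an integer, λ = (n-1)/2, m ∈ ℕ, and let g^m(t) = (1/(Σ_n λ)) · (m+1)! · C_{m+1}^λ(1/√(1+t²)) / (1+t²)^{(m+n)/2} for t ≥ 0 (the Euclidean limit of the Poisson wavelets of order m). Then g^m decays at infinity polynomially with degree m + n + ((m+1) mod 2); that is, lim_{t→∞} t^{m+n+ε} g^m(t) exists and is a nonzero real number, where ε = 1 if m is even and ε = 0 if m is odd. -/
open Real MeasureTheory Set Filter
open scoped RealInnerProductSpace BigOperators

/-- The Euclidean limit `g^m` of the Poisson wavelets of order `m`. -/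
noncomputable def euclideanLimit (n m : ℕ) (t : ℝ) : ℝ :=
  (1 / (sigmaN n * lamb n)) * (Nat.factorial (m + 1) : ℝ) *
    gegenbauer (lamb n) (m + 1) (1 / Real.sqrt (1 + t ^ 2)) /
    (1 + t ^ 2) ^ (((m : ℝ) + n) / 2)

/-- `g^m` decays at infinity polynomially with degree
`m + n + ((m+1) mod 2)`. -/
theorem stmt13 (n m : ℕ) (hn : 2 ≤ n) (hm : 1 ≤ m) :
    ∃ L : ℝ, L ≠ 0 ∧
      Tendsto (fun t : ℝ => t ^ (m + n + (m + 1) % 2) * euclideanLimit n m t)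
        atTop (nhds L) := by
  have hlam : 0 < lamb n := by
    have h2 : (2:ℝ) ≤ (n:ℝ) := by exact_mod_cast hn
    unfold lamb; linarith
  set l : ℕ := m + 1 with hldef
  set ε : ℕ := l % 2 with hεdef
  set A : ℝ := (1 / (sigmaN n * lamb n)) * (Nat.factorial l : ℝ) with hAdef
  set H : ℝ → ℝ := fun u => ∑ k ∈ Finset.range (l / 2 + 1),
      ((-1 : ℝ) ^ k * Real.Gamma ((l : ℝ) - (k : ℝ) + lamb n) /
        (Real.Gamma (lamb n) * (Nat.factorial k : ℝ) * (Nat.factorial (l - 2 * k) : ℝ)) *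
        2 ^ (l - 2 * k)) * u ^ (l - 2 * k - ε) with hHdef
  -- gegenbauer factorization
  have hgeg : ∀ u : ℝ, gegenbauer (lamb n) l u = u ^ ε * H u := by
    intro u
    unfold gegenbauer
    rw [hHdef, Finset.mul_sum]
    refine Finset.sum_congr rfl fun k hk => ?_
    have hk' : k ≤ l / 2 := Finset.mem_range_succ_iff.mp hk
    have hpow : u ^ (l - 2 * k) = u ^ (l - 2 * k - ε) * u ^ ε := by
      rw [← pow_add]; congr 1; omega
    rw [mul_pow, hpow]; ring
  have hHc : Continuous H := by
    rw [hHdef]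
    exact continuous_finset_sum _ fun k _ => continuous_const.mul (continuous_pow _)
  -- u → 0
  have hsq : Tendsto (fun t : ℝ => Real.sqrt (1 + t ^ 2)) atTop atTop := by
    refine tendsto_atTop_mono (fun t => ?_) tendsto_id
    calc (t : ℝ) ≤ |t| := le_abs_self t
      _ = Real.sqrt (t ^ 2) := (Real.sqrt_sq_eq_abs t).symm
      _ ≤ Real.sqrt (1 + t ^ 2) := Real.sqrt_le_sqrt (by linarith)
  have hu : Tendsto (fun t : ℝ => 1 / Real.sqrt (1 + t ^ 2)) atTop (nhds 0) := by
    simpa [one_div, Pi.inv_def] using hsq.inv_tendsto_atTop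
  -- t * u → 1
  have h1 : Tendsto (fun t : ℝ => t * (1 / Real.sqrt (1 + t ^ 2))) atTop (nhds 1) := by
    have hbase : Tendsto (fun t : ℝ => 1 / t ^ 2 + 1) atTop (nhds 1) := by
      have h0 : Tendsto (fun t : ℝ => 1 / t ^ 2) atTop (nhds 0) := by
        have hp : Tendsto (fun t : ℝ => t ^ 2) atTop atTop :=
          tendsto_pow_atTop (by norm_num)
        simpa [one_div, Pi.inv_def] using hp.inv_tendsto_atTop
      simpa using h0.add tendsto_const_nhds
    have hsqrt : Tendsto (fun t : ℝ => Real.sqrt (1 / t ^ 2 + 1)) atTop (nhds 1) := by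
      have := (Real.continuous_sqrt.tendsto 1).comp hbase
      simpa [Function.comp_def] using this
    have hinv : Tendsto (fun t : ℝ => (Real.sqrt (1 / t ^ 2 + 1))⁻¹) atTop (nhds 1) := by
      simpa using hsqrt.inv₀ one_ne_zero
    refine hinv.congr' ?_
    filter_upwards [eventually_ge_atTop (1:ℝ)] with t ht
    have ht0 : (0:ℝ) < t := lt_of_lt_of_le one_pos ht
    have h1t : 1 / t ^ 2 + 1 = (1 + t ^ 2) / t ^ 2 := by field_simp
    have hst : Real.sqrt (t ^ 2) = t := by
      rw [Real.sqrt_sq ht0.le]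
    rw [h1t, Real.sqrt_div (by positivity) (t ^ 2), hst]
    have hs0 : 0 < Real.sqrt (1 + t ^ 2) := Real.sqrt_pos.mpr (by positivity)
    field_simp
  -- key pointwise identity
  have key : ∀ t : ℝ, 1 ≤ t → t ^ (m + n + ε) * euclideanLimit n m t
      = A * (t * (1 / Real.sqrt (1 + t ^ 2))) ^ (m + n + ε) *
        H (1 / Real.sqrt (1 + t ^ 2)) := by
    intro t ht
    have h0 : (0:ℝ) < 1 + t ^ 2 := by positivity
    have hs0 : 0 < Real.sqrt (1 + t ^ 2) := Real.sqrt_pos.mpr h0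
    have hrpow : (1 + t ^ 2) ^ (((m:ℝ) + n) / 2) = Real.sqrt (1 + t ^ 2) ^ (m + n) := by
      rw [show ((m:ℝ) + n) / 2 = (1/2 : ℝ) * ((m + n : ℕ) : ℝ) by push_cast; ring,
        Real.rpow_mul h0.le, Real.rpow_natCast, ← Real.sqrt_eq_rpow]
    unfold euclideanLimit
    rw [hgeg, hrpow, mul_pow, pow_add, div_pow, div_pow, one_pow]
    ring
  have hmain : Tendsto (fun t : ℝ => A * (t * (1 / Real.sqrt (1 + t ^ 2))) ^ (m + n + ε) *
      H (1 / Real.sqrt (1 + t ^ 2))) atTop (nhds (A * H 0)) := by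
    have h1' : Tendsto (fun t : ℝ => (t * (1 / Real.sqrt (1 + t ^ 2))) ^ (m + n + ε))
        atTop (nhds 1) := by simpa using h1.pow (m + n + ε)
    have h3 : Tendsto (fun t : ℝ => H (1 / Real.sqrt (1 + t ^ 2))) atTop (nhds (H 0)) :=
      (hHc.tendsto 0).comp hu
    have := (tendsto_const_nhds (x := A) (f := atTop (α := ℝ))).mul h1' |>.mul h3
    simpa using this
  -- value of H 0
  have hH0 : H 0 = ((-1 : ℝ) ^ (l / 2) * Real.Gamma ((l : ℝ) - ((l / 2 : ℕ) : ℝ) + lamb n) /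
        (Real.Gamma (lamb n) * (Nat.factorial (l / 2) : ℝ) * (Nat.factorial ε : ℝ))) * 2 ^ ε := by
    simp only [hHdef]
    rw [Finset.sum_eq_single (l / 2)]
    · have h1' : l - 2 * (l / 2) - ε = 0 := by omega
      have h2' : l - 2 * (l / 2) = ε := by omega
      rw [h1', h2', pow_zero, mul_one]
    · intro k hk hne
      have hk' : k ≤ l / 2 := Finset.mem_range_succ_iff.mp hk
      have : 0 < l - 2 * k - ε := by omega
      rw [zero_pow this.ne', mul_zero]
    · intro h
      exact absurd (Finset.self_mem_range_succ (l / 2)) h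
  have hσ : 0 < sigmaN n := by
    unfold sigmaN
    have hg : 0 < Real.Gamma (lamb n + 1) := Real.Gamma_pos_of_pos (by linarith)
    positivity
  have hA : A ≠ 0 := by
    rw [hAdef]
    have : (0:ℝ) < Nat.factorial l := by exact_mod_cast Nat.factorial_pos l
    positivity
  have hH0ne : H 0 ≠ 0 := by
    rw [hH0]
    have hg1 : 0 < Real.Gamma ((l : ℝ) - ((l / 2 : ℕ) : ℝ) + lamb n) := by
      apply Real.Gamma_pos_of_pos
      have : ((l / 2 : ℕ) : ℝ) ≤ (l : ℝ) := by exact_mod_cast Nat.div_le_self l 2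
      linarith
    have hg2 : 0 < Real.Gamma (lamb n) := Real.Gamma_pos_of_pos hlam
    have hf1 : (0:ℝ) < Nat.factorial (l / 2) := by exact_mod_cast Nat.factorial_pos _
    have hf2 : (0:ℝ) < Nat.factorial ε := by exact_mod_cast Nat.factorial_pos _
    have h1' : ((-1 : ℝ) ^ (l / 2)) ≠ 0 := pow_ne_zero _ (by norm_num)
    apply mul_ne_zero
    · exact div_ne_zero (mul_ne_zero h1' hg1.ne') (by positivity)
    · positivity
  refine ⟨A * H 0, mul_ne_zero hA hH0ne, ?_⟩
  refine hmain.congr' ?_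
  filter_upwards [eventually_ge_atTop (1:ℝ)] with t ht
  exact (key t ht).symm
end
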